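/- Let U, W ∈ SU(2) ⊆ U(2) be 2×2 unitary matrices with det W = 1 and trace(W) real and nonnegative. Then for every unit complex scalar λ, the operator norm satisfies ‖I - W‖ ≤ ‖I - λW‖. -/

import Mathlib

/-- The operator norm of a 2×2 complex matrix, acting on ℂ². -/
noncomputable def opNorm (M : Matrix (Fin 2) (Fin 2) ℂ) : ℝ :=
  ‖Matrix.toEuclideanCLM (𝕜 := ℂ) (n := Fin 2) M‖

open scoped Matrix.Norms.L2Operator


lemma col16 (B : Matrix (Fin 2) (Fin 2) ℂ) (j : Fin 2) :
    ((star B * B) j j).re ≤ ‖B‖ ^ 2 := by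
  have hv : ‖(EuclideanSpace.single j (1:ℂ) : EuclideanSpace ℂ (Fin 2))‖ = 1 := by
    rw [EuclideanSpace.norm_single, norm_one]
  have hle := Matrix.l2_opNorm_mulVec B (EuclideanSpace.single j (1:ℂ))
  rw [hv, mul_one] at hle
  have heq : ‖(EuclideanSpace.equiv (Fin 2) ℂ).symm
      (B.mulVec (EuclideanSpace.single j (1:ℂ)))‖ ^ 2 = ((star B * B) j j).re := by
    have hv2 : (EuclideanSpace.single j (1:ℂ) : Fin 2 → ℂ) = Pi.single j 1 := rfl
    rw [EuclideanSpace.norm_eq, Real.sq_sqrt (by positivity)]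
    rw [Matrix.mul_apply, Fin.sum_univ_two]
    simp only [Matrix.star_apply, Complex.star_def, ← Complex.normSq_eq_conj_mul_self,
      Complex.add_re, Complex.ofReal_re]
    simp [hv2, Matrix.mulVec_single, Complex.sq_norm]
  nlinarith [norm_nonneg B,
    norm_nonneg ((EuclideanSpace.equiv (Fin 2) ℂ).symm (B.mulVec (EuclideanSpace.single j (1:ℂ))))]

lemma aux16 (W : Matrix (Fin 2) (Fin 2) ℂ)
    (hW : W ∈ Matrix.unitaryGroup (Fin 2) ℂ) (hdet : W.det = 1)
    (htr_im : W.trace.im = 0) (htr_re : 0 ≤ W.trace.re)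
    (l : ℂ) (hl : ‖l‖ = 1) :
    ‖(1 - W : Matrix (Fin 2) (Fin 2) ℂ)‖ ≤ ‖(1 - l • W : Matrix (Fin 2) (Fin 2) ℂ)‖ := by
  set t : ℝ := W.trace.re with ht
  have htr : W.trace = (t : ℂ) := by apply Complex.ext <;> simp [htr_im, ht]
  have hsW : star W * W = 1 := hW.1
  have hstar : star W = W.adjugate := by
    have h1 : W * W.adjugate = 1 := by rw [Matrix.mul_adjugate, hdet, one_smul]
    calc star W = star W * (W * W.adjugate) := by rw [h1, mul_one]
      _ = (star W * W) * W.adjugate := (mul_assoc _ _ _).symm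
      _ = W.adjugate := by rw [hsW, one_mul]
  have hadd : W + star W = (t : ℂ) • 1 := by
    rw [← htr, hstar]
    ext i j
    fin_cases i <;> fin_cases j <;>
      simp [Matrix.adjugate_fin_two, Matrix.trace_fin_two, Matrix.one_apply] <;> ring
  have hl2 : (starRingEnd ℂ) l * l = 1 := by
    have h : Complex.normSq l = 1 := by
      simp [Complex.normSq_eq_norm_sq, hl]
    rw [← Complex.normSq_eq_conj_mul_self, h, Complex.ofReal_one]
  have hlre : l.re ≤ 1 := by
    calc l.re ≤ ‖l‖ := Complex.re_le_norm l
      _ = 1 := by rw [hl]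
  -- the Gram matrix of 1 - W is scalar
  have hM1 : star (1 - W) * (1 - W) = ((2 - t : ℝ) : ℂ) • (1 : Matrix (Fin 2) (Fin 2) ℂ) := by
    have e1 : star (1 - W) * (1 - W) = 1 - W - star W + star W * W := by
      rw [star_sub, star_one]; noncomm_ring
    have hs : star W = (t:ℂ) • 1 - W := by rw [← hadd]; abel
    rw [e1, hsW, hs]
    push_cast
    module
  -- 2 - t is nonnegative
  have h2t : (0:ℝ) ≤ 2 - t := by
    have h00 : ((star (1 - W) * (1 - W)) 0 0).re = 2 - t := by
      rw [hM1]; simp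
    rw [Matrix.mul_apply, Fin.sum_univ_two] at h00
    simp only [Matrix.star_apply, Complex.star_def, ← Complex.normSq_eq_conj_mul_self,
      Complex.add_re, Complex.ofReal_re] at h00
    have := Complex.normSq_nonneg ((1 - W) 0 0)
    have := Complex.normSq_nonneg ((1 - W) 1 0)
    linarith
  -- norm of 1 - W
  have hA2 : ‖(1 - W : Matrix (Fin 2) (Fin 2) ℂ)‖ ^ 2 = 2 - t := by
    have h := Matrix.l2_opNorm_conjTranspose_mul_self (1 - W : Matrix (Fin 2) (Fin 2) ℂ)
    rw [← Matrix.star_eq_conjTranspose, hM1] at h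
    rw [sq, ← h, norm_smul, CStarRing.norm_one, mul_one, Complex.norm_real,
      Real.norm_eq_abs, abs_of_nonneg h2t]
  -- Gram matrix of B := 1 - l • W
  set B : Matrix (Fin 2) (Fin 2) ℂ := 1 - l • W with hB
  have hM2 : star B * B = (2:ℂ) • (1 : Matrix (Fin 2) (Fin 2) ℂ) - l • W
      - (starRingEnd ℂ) l • star W := by
    have e1 : star (1 - l • W) * (1 - l • W)
        = 1 - l • W - (starRingEnd ℂ) l • star W
          + ((starRingEnd ℂ) l * l) • (star W * W) := by
      rw [star_sub, star_one, star_smul]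
      simp only [sub_mul, mul_sub, one_mul, mul_one, smul_mul_smul_comm, Complex.star_def]
      abel
    rw [hB, e1, hsW, hl2]
    module
  have hcol : ∀ j : Fin 2, ((star B * B) j j).re ≤ ‖B‖ ^ 2 := fun j => col16 B j
  -- sum of the diagonal entries
  have hre : (W 0 0).re + (W 1 1).re = t := by
    have := congrArg Complex.re htr
    rw [Matrix.trace_fin_two] at this
    simpa using this
  have him : (W 0 0).im + (W 1 1).im = 0 := by
    have := congrArg Complex.im htr
    rw [Matrix.trace_fin_two] at this
    simpa using this
  have hsum : ((star B * B) 0 0).re + ((star B * B) 1 1).re = 4 - 2 * l.re * t := by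
    rw [hM2]
    simp only [Matrix.sub_apply, Matrix.smul_apply, Matrix.one_apply, Matrix.star_apply,
      smul_eq_mul, Complex.sub_re, Complex.mul_re, Complex.conj_re, Complex.conj_im]
    norm_num
    linear_combination (-2 * l.re) * hre + (2 * l.im) * him
  -- conclude
  have hkey : 2 - t ≤ ‖B‖ ^ 2 := by
    have h0 := hcol 0
    have h1 := hcol 1
    nlinarith [htr_re]
  nlinarith [norm_nonneg (1 - W : Matrix (Fin 2) (Fin 2) ℂ), norm_nonneg B, hA2, hkey]

/-- If W is a 2×2 unitary with det W = 1 and real nonnegative trace, then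
    ‖I - W‖ ≤ ‖I - λW‖ for every unit scalar λ. -/
theorem stmt16 (W : Matrix (Fin 2) (Fin 2) ℂ)
    (hW : W ∈ Matrix.unitaryGroup (Fin 2) ℂ) (hdet : W.det = 1)
    (htr_im : W.trace.im = 0) (htr_re : 0 ≤ W.trace.re) :
    ∀ l : ℂ, ‖l‖ = 1 → opNorm (1 - W) ≤ opNorm (1 - l • W) := by
  intro l hl
  have h := aux16 W hW hdet htr_im htr_re l hl
  rw [Matrix.cstar_norm_def, Matrix.cstar_norm_def] at h
  exact h
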